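/- arXiv:2101.10323 — 2 statements merged into one kernel-verified Lean document; each statement's English description precedes it below -/
import Mathlib

section
/- The eigenvalues of A·(Aᵀ)⁻¹ for an invertible matrix A come in reciprocal pairs: if λ is an eigenvalue of A(Aᵀ)⁻¹ then so is 1/λ. -/
open Matrix Polynomial

lemma eval_charpoly_aux {m : ℕ} {K : Type*} [Field K] (M : Matrix (Fin m) (Fin m) K) (μ : K) :
    M.charpoly.eval μ = (μ • (1 : Matrix (Fin m) (Fin m) K) - M).det := by
  rw [Matrix.charpoly, _root_.eval_det, matPolyEquiv_charmatrix]
  congr 1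
  simp [smul_eq_diagonal_mul, Matrix.scalar]

/-- The eigenvalues of `A (Aᵀ)⁻¹` for an invertible matrix `A` over an algebraically
closed field come in reciprocal pairs: if `λ` is a root of the characteristic
polynomial of `A (Aᵀ)⁻¹`, then so is `λ⁻¹`. -/
theorem stmt_3 {n : ℕ} {K : Type*} [Field K] [IsAlgClosed K]
    (A : Matrix (Fin n) (Fin n) K) (hA : IsUnit A.det)
    (lam : K) (h : (A * (Aᵀ)⁻¹).charpoly.IsRoot lam) :
    (A * (Aᵀ)⁻¹).charpoly.IsRoot lam⁻¹ := by
  set M := A * (Aᵀ)⁻¹ with hM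
  have hAT : IsUnit (Aᵀ).det := by rwa [Matrix.det_transpose]
  have hl : (lam • (1 : Matrix (Fin n) (Fin n) K) - M).det = 0 := by
    have := h
    rwa [Polynomial.IsRoot, eval_charpoly_aux] at this
  -- lam ≠ 0
  have hMdet : IsUnit M.det := by
    rw [hM, Matrix.det_mul]
    exact hA.mul ((Matrix.isUnit_nonsing_inv_det _ hAT))
  have hlam : lam ≠ 0 := by
    rintro rfl
    rw [zero_smul, zero_sub, Matrix.det_neg] at hl
    apply hMdet.ne_zero
    rcases mul_eq_zero.mp hl with h1 | h1
    · exact absurd h1 (pow_ne_zero _ (by norm_num))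
    · exact h1
  -- M⁻¹ = Aᵀ * A⁻¹ and Mᵀ = A⁻¹ * Aᵀ
  have hMinv : M⁻¹ = Aᵀ * A⁻¹ := by
    rw [hM, Matrix.mul_inv_rev, Matrix.nonsing_inv_nonsing_inv _ hAT]
  have hMT : Mᵀ = A⁻¹ * Aᵀ := by
    rw [hM, Matrix.transpose_mul, Matrix.transpose_nonsing_inv, Matrix.transpose_transpose]
  -- det (lam⁻¹ • 1 - M⁻¹) = 0
  have key : (lam⁻¹ • (1 : Matrix (Fin n) (Fin n) K) - M⁻¹).det = 0 := by
    have hfact : lam⁻¹ • (1 : Matrix (Fin n) (Fin n) K) - M⁻¹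
        = (-lam⁻¹) • (M⁻¹ * (lam • (1 : Matrix (Fin n) (Fin n) K) - M)) := by
      rw [Matrix.mul_sub, Matrix.nonsing_inv_mul _ hMdet, Matrix.mul_smul, Matrix.mul_one,
        smul_sub, smul_smul, neg_mul, inv_mul_cancel₀ hlam]
      simp [neg_smul]
      abel
    rw [hfact, Matrix.det_smul, Matrix.det_mul, hl, mul_zero, mul_zero]
  -- conjugation: lam⁻¹ • 1 - Mᵀ = A⁻¹ * (lam⁻¹ • 1 - M⁻¹) * A
  have hconj : lam⁻¹ • (1 : Matrix (Fin n) (Fin n) K) - Mᵀ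
      = A⁻¹ * (lam⁻¹ • (1 : Matrix (Fin n) (Fin n) K) - M⁻¹) * A := by
    rw [Matrix.mul_sub, Matrix.sub_mul, Matrix.mul_smul, Matrix.mul_one, Matrix.smul_mul,
      Matrix.nonsing_inv_mul _ hA, hMT, hMinv, Matrix.mul_assoc A⁻¹, Matrix.mul_assoc Aᵀ,
      Matrix.nonsing_inv_mul _ hA, Matrix.mul_one]
  rw [Polynomial.IsRoot, eval_charpoly_aux]
  calc (lam⁻¹ • (1 : Matrix (Fin n) (Fin n) K) - M).det
      = (lam⁻¹ • (1 : Matrix (Fin n) (Fin n) K) - M)ᵀ.det := (Matrix.det_transpose _).symm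
    _ = (lam⁻¹ • (1 : Matrix (Fin n) (Fin n) K) - Mᵀ).det := by
        rw [Matrix.transpose_sub, Matrix.transpose_smul, Matrix.transpose_one]
    _ = 0 := by rw [hconj, Matrix.det_mul, Matrix.det_mul, key, mul_zero, zero_mul]
end

section
/- For any antidiagonal n×n classical matrix S (S[i][j]=0 unless i+j=n+1) one has (S⊗S)·R(q) = R(q)ᵀ·(S⊗S), where R(q) is the trigonometric R-matrix. -/
open Matrix Kronecker

/-- The trigonometric R-matrix
`R(q) = Σ_{i,j} e_{ii}⊗e_{jj} + (q-1) Σ_i e_{ii}⊗e_{ii} + (q-q⁻¹) Σ_{j<i} e_{ij}⊗e_{ji}`. -/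
noncomputable def Rmat {K : Type*} [Field K] (n : ℕ) (q : K) :
    Matrix (Fin n × Fin n) (Fin n × Fin n) K :=
  (∑ i : Fin n, ∑ j : Fin n,
      single i i (1 : K) ⊗ₖ single j j (1 : K))
    + (q - 1) • (∑ i : Fin n, single i i (1 : K) ⊗ₖ single i i (1 : K))
    + (q - q⁻¹) • (∑ i : Fin n, ∑ j : Fin n,
        if j < i then single i j (1 : K) ⊗ₖ single j i (1 : K) else 0)

/-- The permutation (flip) matrix `P = Σ_{i,j} e_{ij}⊗e_{ji}`. -/
def Pmat {K : Type*} [Field K] (n : ℕ) :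
    Matrix (Fin n × Fin n) (Fin n × Fin n) K :=
  ∑ i : Fin n, ∑ j : Fin n, single i j (1 : K) ⊗ₖ single j i (1 : K)


lemma Rmat_apply {K : Type*} [Field K] (n : ℕ) (q : K) (a b c d : Fin n) :
    Rmat n q (a,b) (c,d) = (if a = c ∧ b = d then 1 else 0)
      + (q - 1) * (if a = b ∧ a = c ∧ b = d then 1 else 0)
      + (q - q⁻¹) * (if b < a ∧ c = b ∧ d = a then 1 else 0) := by
  simp only [Rmat, Matrix.add_apply, Matrix.smul_apply, Matrix.sum_apply,
    kroneckerMap_apply, Matrix.single, Matrix.of_apply,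
    Matrix.zero_apply, smul_eq_mul]
  congr 1
  congr 1
  · rw [Finset.sum_comm]
    by_cases hac : a = c <;> by_cases hbd : b = d <;>
      simp [hac, hbd, ite_and, Finset.sum_ite_eq', fun x : Fin n => (show ¬(x = a ∧ x = c) ∨ True from by tauto)] <;>
      simp_all [eq_comm]
  · by_cases hab : a = b <;> by_cases hac : a = c <;> by_cases hbd : b = d <;>
      simp_all [ite_and, Finset.sum_ite_eq', eq_comm]
  · simp only [apply_ite (fun M : Matrix (Fin n × Fin n) (Fin n × Fin n) K => M (a,b) (c,d)),
      Matrix.zero_apply, kroneckerMap_apply, Matrix.of_apply]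
    congr 1
    simp only [ite_and, mul_ite, mul_one, mul_zero, ite_mul, zero_mul, one_mul]
    rw [Finset.sum_eq_single a (fun x _ hx => Finset.sum_eq_zero fun y _ => by
      split_ifs <;> simp_all) (by simp)]
    rw [Finset.sum_eq_single c (fun y _ hy => by split_ifs <;> simp_all) (by simp)]
    by_cases h2 : c = b
    · subst h2
      by_cases h3 : d = a
      · subst h3; simp
      · simp [h3, Ne.symm h3]
    · simp [h2]

lemma prodL {n : ℕ} {K : Type*} [Field K] (q : K) (S : Matrix (Fin n) (Fin n) K)
    (a b c d : Fin n) :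
    ((S ⊗ₖ S) * Rmat n q) (a,b) (c,d) = S a c * S b d
      + (q - 1) * (if c = d then S a c * S b c else 0)
      + (q - q⁻¹) * (if c < d then S a d * S b c else 0) := by
  rw [Matrix.mul_apply]
  simp only [Fintype.sum_prod_type, kroneckerMap_apply, Rmat_apply, mul_add,
    Finset.sum_add_distrib]
  congr 1
  congr 1
  · simp [ite_and, mul_ite, Finset.sum_ite_eq']
  · by_cases h : c = d <;>
      simp [h, ite_and, mul_ite, Finset.sum_ite_eq', mul_comm, mul_left_comm]
  · simp only [ite_and, mul_ite, mul_one, mul_zero]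
    rw [Finset.sum_eq_single d (fun x _ hx => Finset.sum_eq_zero fun y _ => by
      split_ifs <;> simp_all) (by simp)]
    rw [Finset.sum_eq_single c (fun y _ hy => by split_ifs <;> simp_all) (by simp)]
    by_cases h : c < d <;> simp [h, mul_comm, mul_left_comm]

lemma prodR {n : ℕ} {K : Type*} [Field K] (q : K) (S : Matrix (Fin n) (Fin n) K)
    (a b c d : Fin n) :
    ((Rmat n q)ᵀ * (S ⊗ₖ S)) (a,b) (c,d) = S a c * S b d
      + (q - 1) * (if a = b then S a c * S a d else 0)
      + (q - q⁻¹) * (if a < b then S b c * S a d else 0) := by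
  rw [Matrix.mul_apply]
  simp only [Fintype.sum_prod_type, kroneckerMap_apply, Matrix.transpose_apply, Rmat_apply,
    add_mul, Finset.sum_add_distrib]
  congr 1
  congr 1
  · simp [ite_and, ite_mul, Finset.sum_ite_eq]
  · by_cases h : a = b <;>
      simp [h, ite_and, ite_mul, Finset.sum_ite_eq, mul_comm, mul_left_comm]
  · simp only [ite_and, ite_mul, one_mul, zero_mul, mul_ite, mul_one, mul_zero]
    rw [Finset.sum_eq_single b (fun x _ hx => Finset.sum_eq_zero fun y _ => by
      split_ifs <;> simp_all) (by simp)]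
    rw [Finset.sum_eq_single a (fun y _ hy => by split_ifs <;> simp_all) (by simp)]
    by_cases h : a < b <;> simp [h, mul_comm, mul_left_comm]

/-- For any antidiagonal matrix `S` one has `(S⊗S)·R(q) = R(q)ᵀ·(S⊗S)`. -/
theorem stmt_11 {n : ℕ} {K : Type*} [Field K] (q : K) (hq : q ≠ 0)
    (S : Matrix (Fin n) (Fin n) K)
    (hS : ∀ i j : Fin n, (i : ℕ) + (j : ℕ) ≠ n - 1 → S i j = 0) :
    (S ⊗ₖ S) * Rmat n q = (Rmat n q)ᵀ * (S ⊗ₖ S) := by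
  have key : ∀ i j : Fin n, S i j ≠ 0 → (i : ℕ) + (j : ℕ) = n - 1 := by
    intro i j h
    by_contra hc
    exact h (hS i j hc)
  ext ⟨a, b⟩ ⟨c, d⟩
  rw [prodL, prodR]
  congr 1
  congr 1
  · by_cases hcd : c = d <;> by_cases hab : a = b
    · subst hcd; subst hab; simp
    · subst hcd
      have hz : S a c * S b c = 0 := by
        by_cases h1 : S a c = 0
        · simp [h1]
        by_cases h2 : S b c = 0
        · simp [h2]
        have e1 := key a c h1
        have e2 := key b c h2
        exact absurd (Fin.ext (by omega)) hab
      simp [hz, hab]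
    · subst hab
      have hz : S a c * S a d = 0 := by
        by_cases h1 : S a c = 0
        · simp [h1]
        by_cases h2 : S a d = 0
        · simp [h2]
        have e1 := key a c h1
        have e2 := key a d h2
        exact absurd (Fin.ext (by omega)) hcd
      simp [hz, hcd]
    · simp [hcd, hab]
  · by_cases hcd : c < d <;> by_cases hab : a < b
    · simp [hcd, hab, mul_comm]
    · have hz : S a d * S b c = 0 := by
        by_cases h1 : S a d = 0
        · simp [h1]
        by_cases h2 : S b c = 0
        · simp [h2]
        have e1 := key a d h1
        have e2 := key b c h2
        rw [Fin.lt_def] at hcd hab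
        omega
      simp [hz, hcd, hab]
    · have hz : S b c * S a d = 0 := by
        by_cases h1 : S b c = 0
        · simp [h1]
        by_cases h2 : S a d = 0
        · simp [h2]
        have e1 := key b c h1
        have e2 := key a d h2
        rw [Fin.lt_def] at hcd hab
        omega
      simp [hz, hcd, hab]
    · simp [hcd, hab]
end
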